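/- Let A ⊆ ℝ and B = ℝ \ A. If the closure of B in the space H(A) is a σ-compact subset of H(A), then H(A) is σ-compact. -/

import Mathlib

open Set TopologicalSpace Topology

/-- The Hattori topology τ(A) on ℝ: generated by the Euclidean open sets together with
all sets [x, x+ε) with x ∈ ℝ \ A and ε > 0. -/
def hattori (A : Set ℝ) : TopologicalSpace ℝ :=
  TopologicalSpace.generateFrom
    ({s : Set ℝ | IsOpen s} ∪ {s : Set ℝ | ∃ x ∉ A, ∃ ε > 0, s = Set.Ico x (x + ε)})

/-- On a subset of `A`, the Hattori topology induces the Euclidean topology. -/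
lemma hattori_induced_eq {A S : Set ℝ} (hSA : S ⊆ A) :
    TopologicalSpace.induced ((↑) : S → ℝ) (hattori A)
      = TopologicalSpace.induced ((↑) : S → ℝ) inferInstance := by
  rw [hattori, induced_generateFrom_eq]
  apply le_antisymm
  · -- hattori-induced is finer
    conv_rhs => rw [← generateFrom_setOf_isOpen (inferInstance : TopologicalSpace ℝ)]
    rw [induced_generateFrom_eq]
    exact TopologicalSpace.generateFrom_anti
      (Set.image_mono Set.subset_union_left)
  · -- each generator is Euclidean-open in the subspace
    rw [TopologicalSpace.le_generateFrom_iff_subset_isOpen]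
    rintro u ⟨s, hs, rfl⟩
    rcases hs with hs | ⟨x, hxA, ε, hε, rfl⟩
    · have hs' : IsOpen s := hs
      exact hs'.preimage continuous_subtype_val
    · have : ((↑) : S → ℝ) ⁻¹' Set.Ico x (x + ε) = ((↑) : S → ℝ) ⁻¹' Set.Ioo x (x + ε) := by
        ext ⟨y, hy⟩
        have hyx : y ≠ x := fun h => hxA (h ▸ hSA hy)
        simp only [Set.mem_preimage, Set.mem_Ico, Set.mem_Ioo]
        constructor
        · rintro ⟨h1, h2⟩; exact ⟨lt_of_le_of_ne h1 (Ne.symm hyx), h2⟩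
        · rintro ⟨h1, h2⟩; exact ⟨le_of_lt h1, h2⟩
      rw [this]
      exact isOpen_Ioo.preimage continuous_subtype_val

/-- A Euclidean-compact subset of `A` is compact in the Hattori topology. -/
lemma hattori_isCompact {A K : Set ℝ} (hKA : K ⊆ A) (hK : IsCompact K) :
    @IsCompact ℝ (hattori A) K := by
  have hcont : @Continuous K ℝ _ (hattori A) Subtype.val := by
    rw [continuous_iff_le_induced, hattori_induced_eq hKA]
    exact le_rfl
  have hKu : IsCompact (Set.univ : Set K) := isCompact_iff_isCompact_univ.mp hK
  have h2 : @IsCompact ℝ (hattori A) (Subtype.val '' (Set.univ : Set K)) :=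
    @IsCompact.image K ℝ _ (hattori A) _ _ hKu hcont
  rwa [Set.image_univ, Subtype.range_coe] at h2

/-- A Hattori-open subset of `A` is Euclidean-open. -/
lemma hattori_isOpen_euclid {A U : Set ℝ} (hUA : U ⊆ A)
    (hU : IsOpen[hattori A] U) : IsOpen U := by
  have key : ∀ V : Set ℝ, IsOpen[hattori A] V →
      ∀ x ∈ V ∩ A, ∃ ε > 0, Set.Ioo (x - ε) (x + ε) ⊆ V := by
    intro V hV
    induction hV with
    | basic s hs =>
      rintro x ⟨hxV, hxA⟩
      rcases hs with hs | ⟨x0, hx0A, ε, hε, rfl⟩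
      · simp only [Set.mem_setOf_eq] at hs
        rw [Metric.isOpen_iff] at hs
        obtain ⟨δ, hδ, hball⟩ := hs x hxV
        exact ⟨δ, hδ, fun y hy => hball (by rw [Real.ball_eq_Ioo]; exact hy)⟩
      · have hx0 : x0 < x := lt_of_le_of_ne hxV.1 (fun h => hx0A (h ▸ hxA))
        have hx1 : x < x0 + ε := hxV.2
        refine ⟨min (x - x0) (x0 + ε - x), lt_min (by linarith) (by linarith), ?_⟩
        rintro y ⟨h1, h2⟩
        have m1 := min_le_left (x - x0) (x0 + ε - x)
        have m2 := min_le_right (x - x0) (x0 + ε - x)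
        exact ⟨by linarith, by linarith⟩
    | univ => exact fun x _ => ⟨1, one_pos, fun y _ => trivial⟩
    | inter s t _ _ ihs iht =>
      rintro x ⟨⟨hxs, hxt⟩, hxA⟩
      obtain ⟨ε1, hε1, h1⟩ := ihs x ⟨hxs, hxA⟩
      obtain ⟨ε2, hε2, h2⟩ := iht x ⟨hxt, hxA⟩
      refine ⟨min ε1 ε2, lt_min hε1 hε2, fun y hy => ?_⟩
      obtain ⟨hy1, hy2⟩ := hy
      have m1 := min_le_left ε1 ε2
      have m2 := min_le_right ε1 ε2
      exact ⟨h1 ⟨by linarith, by linarith⟩, h2 ⟨by linarith, by linarith⟩⟩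
    | sUnion S _ ih =>
      rintro x ⟨hxS, hxA⟩
      obtain ⟨t, htS, hxt⟩ := hxS
      obtain ⟨ε, hε, hsub⟩ := ih t htS x ⟨hxt, hxA⟩
      exact ⟨ε, hε, fun y hy => ⟨t, htS, hsub hy⟩⟩
  rw [Metric.isOpen_iff]
  intro x hx
  obtain ⟨ε, hε, hsub⟩ := key U hU x ⟨hx, hUA hx⟩
  exact ⟨ε, hε, by rw [Real.ball_eq_Ioo]; exact hsub⟩

/-- If the closure of B = ℝ \ A in H(A) is a σ-compact subset of H(A),
then H(A) is σ-compact. -/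
theorem sigmaCompact_of_sigmaCompact_closure_compl (A B : Set ℝ) (hB : B = Aᶜ)
    (h : @IsSigmaCompact ℝ (hattori A) (closure[hattori A] B)) :
    @SigmaCompactSpace ℝ (hattori A) := by
  have hBC : B ⊆ closure[hattori A] B := @subset_closure ℝ (hattori A) B
  have hUA : (closure[hattori A] B)ᶜ ⊆ A := by
    intro x hx
    by_contra hxA
    exact hx (hBC (by rw [hB]; exact hxA))
  have hUopen_t : IsOpen[hattori A] (closure[hattori A] B)ᶜ :=
    (@isClosed_closure ℝ (hattori A) B).isOpen_compl
  have hUopen : IsOpen (closure[hattori A] B)ᶜ := hattori_isOpen_euclid hUA hUopen_t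
  -- the complement is σ-compact in the Euclidean topology
  have hUsc : IsSigmaCompact (closure[hattori A] B)ᶜ := by
    rw [isSigmaCompact_iff_sigmaCompactSpace]
    have : LocallyCompactSpace ((closure[hattori A] B)ᶜ : Set ℝ) := hUopen.locallyCompactSpace
    infer_instance
  obtain ⟨K, hKc, hKU⟩ := hUsc
  rw [← @isSigmaCompact_univ_iff ℝ (hattori A)]
  obtain ⟨L, hLc, hLC⟩ := h
  refine ⟨fun n => L n ∪ K n, fun n => ?_, ?_⟩
  · have hKn : K n ⊆ (closure[hattori A] B)ᶜ := hKU ▸ Set.subset_iUnion K n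
    exact @IsCompact.union ℝ (hattori A) _ _ (hLc n)
      (hattori_isCompact (hKn.trans hUA) (hKc n))
  · rw [Set.iUnion_union_distrib, hLC, hKU, Set.union_compl_self]
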